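/- Let ℏ > 0 and let z be a complex number with |Im z| < π(1+ℏ). Then the quantum logarithm satisfies conj(φ^ℏ(z)) = φ^ℏ(conj(z)). In particular, φ^ℏ(x) is real for real x. -/
import Mathlib


noncomputable section

open Complex

/-- The shifted contour point `t + iδ(ℏ)`, where `δ(ℏ) := min(1, 1/ℏ)/2`
satisfies `0 < δ < min(1, 1/ℏ)` for `ℏ > 0`. -/
def qContour (ℏ t : ℝ) : ℂ := (t : ℂ) + Complex.I * ((min 1 ℏ⁻¹ / 2 : ℝ) : ℂ)

/-- The quantum logarithm
`φ^ℏ(z) = −2πℏ ∫_ℝ e^{−i(t+iδ)z} / ((e^{π(t+iδ)} − e^{−π(t+iδ)})(e^{πℏ(t+iδ)} − e^{−πℏ(t+iδ)})) dt`. -/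
def qlog (ℏ : ℝ) (z : ℂ) : ℂ :=
  (-(2 * Real.pi * ℏ) : ℝ) *
    ∫ t : ℝ,
      Complex.exp (-Complex.I * qContour ℏ t * z) /
        ((Complex.exp ((Real.pi : ℂ) * qContour ℏ t)
            - Complex.exp (-((Real.pi : ℂ) * qContour ℏ t))) *
         (Complex.exp ((Real.pi : ℂ) * (ℏ : ℂ) * qContour ℏ t)
            - Complex.exp (-((Real.pi : ℂ) * (ℏ : ℂ) * qContour ℏ t))))

lemma conj_qContour (ℏ t : ℝ) : (starRingEnd ℂ) (qContour ℏ t) = - qContour ℏ (-t) := by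
  simp [qContour, map_ofNat]
  ring

lemma key (ℏ : ℝ) (z : ℂ) (t : ℝ) :
    (starRingEnd ℂ) (Complex.exp (-Complex.I * qContour ℏ t * z) /
        ((Complex.exp ((Real.pi : ℂ) * qContour ℏ t)
            - Complex.exp (-((Real.pi : ℂ) * qContour ℏ t))) *
         (Complex.exp ((Real.pi : ℂ) * (ℏ : ℂ) * qContour ℏ t)
            - Complex.exp (-((Real.pi : ℂ) * (ℏ : ℂ) * qContour ℏ t)))))
    = Complex.exp (-Complex.I * qContour ℏ (-t) * (starRingEnd ℂ) z) /
        ((Complex.exp ((Real.pi : ℂ) * qContour ℏ (-t))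
            - Complex.exp (-((Real.pi : ℂ) * qContour ℏ (-t)))) *
         (Complex.exp ((Real.pi : ℂ) * (ℏ : ℂ) * qContour ℏ (-t))
            - Complex.exp (-((Real.pi : ℂ) * (ℏ : ℂ) * qContour ℏ (-t))))) := by
  set c := qContour ℏ (-t) with hc'
  rw [map_div₀, map_mul, map_sub, map_sub,
     ← Complex.exp_conj, ← Complex.exp_conj, ← Complex.exp_conj, ← Complex.exp_conj, ← Complex.exp_conj]
  simp only [map_mul, map_neg, Complex.conj_I, Complex.conj_ofReal, conj_qContour, ← hc']
  rw [show -(-Complex.I) * -c * (starRingEnd ℂ) z = -Complex.I * c * (starRingEnd ℂ) z by ring,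
      show (Real.pi : ℂ) * -c = -((Real.pi:ℂ) * c) by ring,
      show (Real.pi : ℂ) * (ℏ:ℂ) * -c = -((Real.pi:ℂ) * ℏ * c) by ring]
  rw [neg_neg, neg_neg]
  congr 1
  ring

theorem stmt11 (ℏ : ℝ) (hℏ : 0 < ℏ) (z : ℂ) (hz : |z.im| < Real.pi * (1 + ℏ)) :
    (starRingEnd ℂ) (qlog ℏ z) = qlog ℏ ((starRingEnd ℂ) z) := by
  unfold qlog
  rw [map_mul, Complex.conj_ofReal]
  congr 1
  rw [← integral_conj, ← MeasureTheory.integral_neg_eq_self (fun t : ℝ =>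
      Complex.exp (-Complex.I * qContour ℏ t * (starRingEnd ℂ) z) /
        ((Complex.exp ((Real.pi : ℂ) * qContour ℏ t)
            - Complex.exp (-((Real.pi : ℂ) * qContour ℏ t))) *
         (Complex.exp ((Real.pi : ℂ) * (ℏ : ℂ) * qContour ℏ t)
            - Complex.exp (-((Real.pi : ℂ) * (ℏ : ℂ) * qContour ℏ t)))))]
  exact MeasureTheory.integral_congr_ae (Filter.Eventually.of_forall fun t => key ℏ z t)


end
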